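/- arXiv:2309.00554 — 2 statements merged into one kernel-verified Lean document; each statement's English description precedes it below -/
import Mathlib

section
/- Derived projective covers are unique up to isomorphism: if $\pi_1 \colon P_1 \to X$ and $\pi_2 \colon P_2 \to X$ are derived projective covers of an object $X$ in a triangulated category with a t-structure, then there is an isomorphism $\hat{g} \colon P_1 \to P_2$ with $\pi_2 \circ \hat{g} = \pi_1$. -/
open CategoryTheory Limits Pretriangulated

namespace Paper

universe v u

variable {C : Type u} [Category.{v} C] [Preadditive C] [HasZeroObject C]
  [HasShift C ℤ] [∀ n : ℤ, (shiftFunctor C n).Additive] [Pretriangulated C]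

open CategoryTheory.Triangulated

/-- The right perpendicular of a class of objects. -/
def rPerp (T : Set C) : Set C := {Y | ∀ X ∈ T, ∀ f : X ⟶ Y, f = 0}

/-- The left perpendicular of a class of objects. -/
def lPerp (T : Set C) : Set C := {X | ∀ Y ∈ T, ∀ f : X ⟶ Y, f = 0}

/-- `S^{⊥_{>0}}`. -/
def perpGT (S : Set C) : Set C := {X | ∀ P ∈ S, ∀ m : ℤ, 0 < m → ∀ f : P ⟶ X⟦m⟧, f = 0}

/-- `S^{⊥_{<0}}`. -/
def perpLT (S : Set C) : Set C := {X | ∀ P ∈ S, ∀ m : ℤ, m < 0 → ∀ f : P ⟶ X⟦m⟧, f = 0}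

/-- The pair `(S^{⊥_{>0}}, S^{⊥_{<0}})` is the t-structure `t`. -/
def IsSiltingTStructureFor (S : Set C) (t : TStructure C) : Prop :=
  (∀ X : C, t.le 0 X ↔ X ∈ perpGT S) ∧ (∀ X : C, t.ge 0 X ↔ X ∈ perpLT S)

/-- `X` is a retract (direct summand) of `Y`. -/
def IsRetractOf (X Y : C) : Prop := ∃ (i : X ⟶ Y) (r : Y ⟶ X), i ≫ r = 𝟙 X


/-- An indecomposable object: nonzero, and not a nontrivial biproduct. -/
def IndecObj {A : Type*} [Category A] [Limits.HasZeroMorphisms A]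
    [HasBinaryBiproducts A] (X : A) : Prop :=
  ¬ IsZero X ∧ ∀ Y Z : A, Nonempty (X ≅ Y ⊞ Z) → IsZero Y ∨ IsZero Z

section Biprod
variable [HasFiniteBiproducts C]

/-- The Karoubi closure: direct summands of finite coproducts of objects of `S`. -/
def Kar (S : Set C) : Set C :=
  {X | ∃ (n : ℕ) (f : Fin n → C), (∀ i, f i ∈ S) ∧ IsRetractOf X (⨁ f)}

/-- A class of objects is Krull–Schmidt: every object is a finite biproduct of
objects of the class with local endomorphism rings. -/
def KrullSchmidtOn (T : Set C) : Prop :=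
  ∀ X ∈ T, ∃ (n : ℕ) (f : Fin n → C),
    (∀ i, f i ∈ T ∧ IsLocalRing (End (f i))) ∧ Nonempty (X ≅ ⨁ f)

/-- The category `C` is Krull–Schmidt. -/
def IsKrullSchmidt : Prop :=
  ∀ X : C, ∃ (n : ℕ) (f : Fin n → C),
    (∀ i, IsLocalRing (End (f i))) ∧ Nonempty (X ≅ ⨁ f)

/-- A silting collection: pairwise non-isomorphic indecomposables whose Karoubi
closure is Krull–Schmidt, such that the perpendicular pair is the t-structure `t`. -/
structure IsSiltingCollection (S : Set C) (t : TStructure C) : Prop where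
  indec : ∀ P ∈ S, IndecObj P
  pairwise_noniso : ∀ P ∈ S, ∀ Q ∈ S, P ≠ Q → IsEmpty (P ≅ Q)
  kar_ks : KrullSchmidtOn (Kar S)
  tstr : IsSiltingTStructureFor S t

end Biprod

/-- Derived projective objects with respect to a t-structure. -/
def IsDerivedProjective (t : TStructure C) (P : C) : Prop :=
  t.le 0 P ∧ ∀ (X : C), t.le 0 X → ∀ f : P ⟶ X⟦(1 : ℤ)⟧, f = 0

/-- The heart of a t-structure, as a class of objects. -/
def heartSet (t : TStructure C) : Set C := {X | t.le 0 X ∧ t.ge 0 X}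

/-- The heart of a t-structure, as a full subcategory. -/
abbrev Heart (t : TStructure C) := ObjectProperty.FullSubcategory (heartSet t)

instance (t : TStructure C) : Category (Heart t) :=
  ObjectProperty.FullSubcategory.category (heartSet t)

instance (P : C → Prop) : Preadditive (ObjectProperty.FullSubcategory P) where
  homGroup X Y := InducedCategory.homEquiv.addCommGroup
  add_comp _ _ _ f f' g := by ext; exact Preadditive.add_comp _ _ _ f.hom f'.hom g.hom
  comp_add _ _ _ f g g' := by ext; exact Preadditive.comp_add _ _ _ f.hom g.hom g'.hom

/-- Truncation data for a t-structure: the truncation functors `t_{≤0}` (right adjoint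
to the inclusion of `D^{t≤0}`), `t_{≥0}` (left adjoint to the inclusion of `D^{t≥0}`),
and the zeroth cohomology functor `H = t_{≤0} ∘ t_{≥0}`. -/
structure TruncationData (t : TStructure C) where
  /-- the zeroth cohomology functor -/
  H : C ⥤ C
  H_heart : ∀ X : C, H.obj X ∈ heartSet t
  τle : C ⥤ C
  τleCounit : τle ⟶ 𝟭 C
  τle_mem : ∀ X : C, t.le 0 (τle.obj X)
  τle_fac : ∀ (X Z : C), t.le 0 Z → ∀ f : Z ⟶ X,
    ∃! g : Z ⟶ τle.obj X, g ≫ τleCounit.app X = f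
  τge : C ⥤ C
  τgeUnit : 𝟭 C ⟶ τge
  τge_mem : ∀ X : C, t.ge 0 (τge.obj X)
  τge_fac : ∀ (X Z : C), t.ge 0 Z → ∀ f : X ⟶ Z,
    ∃! g : τge.obj X ⟶ Z, τgeUnit.app X ≫ g = f
  H_eq : H = τge ⋙ τle

/-- The zeroth cohomology functor, valued in the heart. -/
def TruncationData.Hh {t : TStructure C} (TD : TruncationData t) : C ⥤ Heart t :=
  ObjectProperty.lift _ TD.H TD.H_heart

/-- A projective cover: an essential epimorphism from a projective object. -/
def IsProjectiveCover {A : Type*} [Category A] {P X : A} (π : P ⟶ X) : Prop :=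
  Projective P ∧ Epi π ∧ ∀ (R : A) (g : R ⟶ P), Epi (g ≫ π) → Epi g

/-- A derived projective cover of `X`. -/
def IsDerivedProjectiveCover {t : TStructure C} (TD : TruncationData t)
    {P X : C} (π : P ⟶ X) : Prop :=
  IsDerivedProjective t P ∧ IsProjectiveCover (TD.Hh.map π)

/-- A t-structure is non-degenerate. -/
def NonDegenerate (t : TStructure C) : Prop :=
  (∀ X : C, (∀ n : ℤ, t.le n X) → IsZero X) ∧ (∀ X : C, (∀ n : ℤ, t.ge n X) → IsZero X)

/-- An object of a category has finite length: bounded chains of subobjects. -/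
def FiniteLengthObj {A : Type*} [Category A] (X : A) : Prop :=
  ∃ n : ℕ, ∀ s : Fin (n + 1) → Subobject X, ¬ StrictMono s

/-- `D` has derived projectives: every projective of the heart is `H⁰` of a
derived projective. -/
def HasDerivedProjectives {t : TStructure C} (TD : TruncationData t) : Prop :=
  ∀ Q : Heart t, Projective Q → ∃ P : C, IsDerivedProjective t P ∧ Nonempty (TD.Hh.obj P ≅ Q)

/-- `D` has enough derived projectives. -/
def HasEnoughDerivedProjectives {t : TStructure C} (TD : TruncationData t) : Prop :=
  EnoughProjectives (Heart t) ∧ HasDerivedProjectives TD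

/-- The extension closure of a class of objects. -/
inductive ExtClos (T : Set C) : C → Prop
  | of {X : C} : X ∈ T → ExtClos T X
  | zero {X : C} : IsZero X → ExtClos T X
  | ext {A E B : C} (f : A ⟶ E) (g : E ⟶ B) (h : B ⟶ A⟦(1 : ℤ)⟧) :
      Triangle.mk f g h ∈ (distTriang C) → ExtClos T A → ExtClos T B → ExtClos T E

/-- The Karoubi (retract) closure of a class of objects. -/
def KarClos (T : Set C) : Set C := {X | ∃ Y ∈ T, IsRetractOf X Y}

/-- The triangulated subcategory generated by a class of objects. -/
inductive TriaClos (T : Set C) : C → Prop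
  | of {X : C} : X ∈ T → TriaClos T X
  | zero {X : C} : IsZero X → TriaClos T X
  | shift {X : C} (n : ℤ) : TriaClos T X → TriaClos T (X⟦n⟧)
  | ext {A E B : C} (f : A ⟶ E) (g : E ⟶ B) (h : B ⟶ A⟦(1 : ℤ)⟧) :
      Triangle.mk f g h ∈ (distTriang C) → TriaClos T A → TriaClos T B → TriaClos T E

/-- The thick subcategory generated by a class of objects. -/
inductive ThickClos (T : Set C) : C → Prop
  | of {X : C} : X ∈ T → ThickClos T X
  | zero {X : C} : IsZero X → ThickClos T X
  | shift {X : C} (n : ℤ) : ThickClos T X → ThickClos T (X⟦n⟧)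
  | ext {A E B : C} (f : A ⟶ E) (g : E ⟶ B) (h : B ⟶ A⟦(1 : ℤ)⟧) :
      Triangle.mk f g h ∈ (distTriang C) → ThickClos T A → ThickClos T B → ThickClos T E
  | retract {X Y : C} : IsRetractOf X Y → ThickClos T Y → ThickClos T X

/-- A thick subcategory, as a class of objects. -/
structure IsThickSet (T : Set C) : Prop where
  zero : ∀ X : C, IsZero X → X ∈ T
  shift : ∀ X ∈ T, ∀ n : ℤ, X⟦n⟧ ∈ T
  ext : ∀ (A E B : C) (f : A ⟶ E) (g : E ⟶ B) (h : B ⟶ A⟦(1 : ℤ)⟧),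
    Triangle.mk f g h ∈ (distTriang C) → A ∈ T → B ∈ T → E ∈ T
  retract : ∀ X Y : C, IsRetractOf X Y → Y ∈ T → X ∈ T

/-- A weight structure on the subcategory of `C` given by the class `CC`. -/
structure WeightStructureOn (CC : Set C) where
  le : Set C
  ge : Set C
  le_sub : le ⊆ CC
  ge_sub : ge ⊆ CC
  le_iso : ∀ X Y : C, (X ≅ Y) → X ∈ le → Y ∈ le
  ge_iso : ∀ X Y : C, (X ≅ Y) → X ∈ ge → Y ∈ ge
  le_retract : ∀ X Y : C, IsRetractOf X Y → Y ∈ le → X ∈ le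
  ge_retract : ∀ X Y : C, IsRetractOf X Y → Y ∈ ge → X ∈ ge
  le_shift : ∀ X ∈ le, X⟦(1 : ℤ)⟧ ∈ le
  ge_shift : ∀ X ∈ ge, X⟦(-1 : ℤ)⟧ ∈ ge
  orth : ∀ X : C, X⟦(1 : ℤ)⟧ ∈ ge → ∀ Y ∈ le, ∀ f : X ⟶ Y, f = 0
  decomp : ∀ X ∈ CC, ∃ (A B : C) (f : A ⟶ X) (g : X ⟶ B) (h : B ⟶ A⟦(1 : ℤ)⟧),
    Triangle.mk f g h ∈ (distTriang C) ∧ A⟦(1 : ℤ)⟧ ∈ ge ∧ B ∈ le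

namespace WeightStructureOn

variable {CC : Set C} (w : WeightStructureOn CC)

/-- `C_{w>0}`. -/
def gt : Set C := {X | X⟦(1 : ℤ)⟧ ∈ w.ge}

/-- `C_{w<0}`. -/
def lt : Set C := {X | X⟦(-1 : ℤ)⟧ ∈ w.le}

end WeightStructureOn

section UniquenessAux

lemma aux_hom_zero (t : TStructure C) {a b : ℤ} (hab : a < b) {X Y : C}
    (hX : t.le a X) (hY : t.ge b Y) (f : X ⟶ Y) : f = 0 := by
  have hX' : t.le 0 (X⟦a⟧) := t.le_shift a a 0 (by omega) X hX
  have hY' : t.ge 1 (Y⟦a⟧) :=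
    t.ge_antitone (show (1:ℤ) ≤ b - a by omega) _ (t.ge_shift b a (b - a) (by omega) Y hY)
  have h0 : (shiftFunctor C a).map f = 0 := t.zero' _ hX' hY'
  exact (shiftFunctor C a).map_injective (by rw [h0, Functor.map_zero])

lemma aux_le_ext (t : TStructure C) {T : Triangle C} (hT : T ∈ distTriang C)
    (h₁ : t.le 0 T.obj₁) (h₃ : t.le 0 T.obj₃) : t.le 0 T.obj₂ := by
  obtain ⟨A, B, hA, hB, f, g, h, mem⟩ := t.exists_triangle T.obj₂ 0 1 rfl
  have hg : g = 0 := by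
    have h1 : T.mor₁ ≫ g = 0 := t.zero' _ h₁ hB
    obtain ⟨ψ, hψ⟩ := Triangle.yoneda_exact₂ T hT g h1
    rw [hψ, t.zero' ψ h₃ hB, comp_zero]
  obtain ⟨r, hr⟩ : ∃ r : T.obj₂ ⟶ A, 𝟙 T.obj₂ = r ≫ f :=
    Triangle.coyoneda_exact₂ _ mem (𝟙 T.obj₂)
      (by show 𝟙 T.obj₂ ≫ g = 0; rw [hg, comp_zero])
  have hd : (f ≫ r - 𝟙 A) ≫ f = 0 := by
    rw [Preadditive.sub_comp, Category.id_comp, Category.assoc, ← hr, Category.comp_id, sub_self]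
  obtain ⟨e, he⟩ : ∃ e : A ⟶ B⟦(-1:ℤ)⟧,
      f ≫ r - 𝟙 A = e ≫ (Triangle.mk f g h).invRotate.mor₁ :=
    Triangle.coyoneda_exact₂ _ (inv_rot_of_distTriang _ mem) (f ≫ r - 𝟙 A) (by exact hd)
  have he0 : e = 0 := aux_hom_zero t (show (0:ℤ) < 2 by omega) hA
    (t.ge_shift 1 (-1) 2 (by omega) B hB) e
  have hfr : f ≫ r = 𝟙 A := by
    have : f ≫ r - 𝟙 A = 0 := by rw [he, show e = 0 from he0]; exact zero_comp
    rwa [sub_eq_zero] at this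
  exact ((t.le 0).prop_iff_of_iso (Iso.mk f r hfr hr.symm)).1 hA

lemma aux_factor_unique (t : TStructure C) {X A B : C} {f : A ⟶ X} {g : X ⟶ B}
    {h : B ⟶ A⟦(1:ℤ)⟧} (mem : Triangle.mk f g h ∈ distTriang C)
    (hA : t.le (-1) A) {Z : C} (hZ : t.ge 0 Z) (φ : X ⟶ Z) :
    ∃! k : B ⟶ Z, g ≫ k = φ := by
  have hf : f ≫ φ = 0 := aux_hom_zero t (show (-1:ℤ) < 0 by omega) hA hZ _
  obtain ⟨ψ, hψ⟩ : ∃ ψ : B ⟶ Z, φ = g ≫ ψ := Triangle.yoneda_exact₂ _ mem φ hf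
  refine ⟨ψ, hψ.symm, ?_⟩
  intro k hk
  have hd : g ≫ (k - ψ) = 0 := by
    rw [Preadditive.comp_sub, hk, ← hψ, sub_self]
  obtain ⟨e, he⟩ : ∃ e : A⟦(1:ℤ)⟧ ⟶ Z, k - ψ = h ≫ e :=
    Triangle.yoneda_exact₃ _ mem (k - ψ) hd
  have he0 : e = 0 := aux_hom_zero t (show (-2:ℤ) < 0 by omega)
    (t.le_shift (-1) 1 (-2) (by omega) A hA) hZ e
  have hk0 : k - ψ = 0 := by rw [he, he0, comp_zero]
  rw [sub_eq_zero] at hk0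
  exact hk0

lemma aux_ge_iso (t : TStructure C) (τge : C ⥤ C) (gu : 𝟭 C ⟶ τge)
    (gem : ∀ Y : C, t.ge 0 (τge.obj Y))
    (gfac : ∀ X Z : C, t.ge 0 Z → ∀ f : X ⟶ Z, ∃! g : τge.obj X ⟶ Z, gu.app X ≫ g = f)
    {X A B : C} {f : A ⟶ X} {g : X ⟶ B} {h : B ⟶ A⟦(1:ℤ)⟧}
    (mem : Triangle.mk f g h ∈ distTriang C) (hA : t.le (-1) A) (hB : t.ge 0 B) :
    ∃ k : B ⟶ τge.obj X, IsIso k ∧ g ≫ k = gu.app X := by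
  obtain ⟨k, hk, _⟩ := aux_factor_unique t mem hA (gem X) (gu.app X)
  obtain ⟨k', hk', _⟩ := gfac X B hB g
  have h1 : k ≫ k' = 𝟙 B := by
    obtain ⟨m, _, hmu⟩ := aux_factor_unique t mem hA hB g
    have e1 : g ≫ (k ≫ k') = g := by rw [← Category.assoc, hk, hk']
    rw [hmu _ e1, hmu (𝟙 B) (Category.comp_id g)]
  have h2 : k' ≫ k = 𝟙 (τge.obj X) := by
    have e1 : gu.app X ≫ (k' ≫ k) = gu.app X := by rw [← Category.assoc, hk', hk]
    obtain ⟨m, _, hmu⟩ := gfac X (τge.obj X) (gem X) (gu.app X)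
    rw [hmu _ e1, hmu (𝟙 _) (Category.comp_id _)]
  exact ⟨k, ⟨⟨k', h1, h2⟩⟩, hk⟩

lemma aux_tge_le (t : TStructure C) (τge : C ⥤ C) (gu : 𝟭 C ⟶ τge)
    (gem : ∀ Y : C, t.ge 0 (τge.obj Y))
    (gfac : ∀ X Z : C, t.ge 0 Z → ∀ f : X ⟶ Z, ∃! g : τge.obj X ⟶ Z, gu.app X ≫ g = f)
    {P : C} (hP : t.le 0 P) : t.le 0 (τge.obj P) := by
  obtain ⟨A, B, hA, hB, f, g, h, mem⟩ := t.exists_triangle P (-1) 0 (by omega)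
  obtain ⟨k, hkiso, hk⟩ := aux_ge_iso t τge gu gem gfac mem hA hB
  have hBle : t.le 0 B := by
    have hrot := rot_of_distTriang _ mem
    refine aux_le_ext t hrot ?_ ?_
    · exact hP
    · exact t.le_monotone (show (-2:ℤ) ≤ 0 by omega) _ (t.le_shift (-1) 1 (-2) (by omega) A hA)
  exact ((t.le 0).prop_iff_of_iso (@asIso _ _ _ _ k hkiso)).1 hBle

lemma aux_counit_iso (t : TStructure C) (τle : C ⥤ C) (cu : τle ⟶ 𝟭 C)
    (lem : ∀ Y : C, t.le 0 (τle.obj Y))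
    (lfac : ∀ X Z : C, t.le 0 Z → ∀ f : Z ⟶ X, ∃! g : Z ⟶ τle.obj X, g ≫ cu.app X = f)
    {W : C} (hW : t.le 0 W) : IsIso (cu.app W) := by
  obtain ⟨e, he, _⟩ := lfac W W hW (𝟙 W)
  refine ⟨e, ?_, he⟩
  obtain ⟨m, _, hmu⟩ := lfac W (τle.obj W) (lem W) (cu.app W)
  have h1 : (cu.app W ≫ e) ≫ cu.app W = cu.app W := by
    rw [Category.assoc, he]
    exact Category.comp_id _
  rw [hmu _ h1, hmu (𝟙 _) (Category.id_comp _)]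

lemma aux_derProj_zero (t : TStructure C) {P : C} (hP : IsDerivedProjective t P)
    {A : C} (hA : t.le (-1) A) (φ : P ⟶ A) : φ = 0 := by
  have hA' : t.le 0 (A⟦(-1:ℤ)⟧) := t.le_shift (-1) (-1) 0 (by omega) A hA
  have e := (shiftFunctorCompIsoId C (-1 : ℤ) (1 : ℤ) (by omega)).app A
  have h0 : φ ≫ e.inv = 0 := hP.2 _ hA' _
  have hφ : φ = (φ ≫ e.inv) ≫ e.hom := by
    rw [Category.assoc, e.inv_hom_id]
    exact (Category.comp_id φ).symm
  rw [hφ, h0, zero_comp]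

lemma aux_comp_g_bij (t : TStructure C) {P : C} (hP : IsDerivedProjective t P)
    {X A B : C} {f : A ⟶ X} {g : X ⟶ B} {h : B ⟶ A⟦(1:ℤ)⟧}
    (mem : Triangle.mk f g h ∈ distTriang C) (hA : t.le (-1) A) :
    Function.Bijective (fun φ : P ⟶ X => φ ≫ g) := by
  constructor
  · intro φ₁ φ₂ h12
    have hd : (φ₁ - φ₂) ≫ g = 0 := by
      rw [Preadditive.sub_comp]
      rw [show φ₁ ≫ g = φ₂ ≫ g from h12, sub_self]
    obtain ⟨w, hw⟩ : ∃ w : P ⟶ A, φ₁ - φ₂ = w ≫ f :=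
      Triangle.coyoneda_exact₂ _ mem (φ₁ - φ₂) hd
    have hw0 : w = 0 := aux_derProj_zero t hP hA w
    have : φ₁ - φ₂ = 0 := by rw [hw, hw0, zero_comp]
    rwa [sub_eq_zero] at this
  · intro φ
    have h0 : φ ≫ h = 0 := hP.2 A (t.le_monotone (show (-1:ℤ) ≤ 0 by omega) A hA) _
    obtain ⟨ψ, hψ⟩ : ∃ ψ : P ⟶ X, φ = ψ ≫ g :=
      Triangle.coyoneda_exact₃ _ mem φ (by exact h0)
    exact ⟨ψ, hψ.symm⟩

lemma aux_comp_unit_bij (t : TStructure C) (τge : C ⥤ C) (gu : 𝟭 C ⟶ τge)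
    (gem : ∀ Y : C, t.ge 0 (τge.obj Y))
    (gfac : ∀ X Z : C, t.ge 0 Z → ∀ f : X ⟶ Z, ∃! g : τge.obj X ⟶ Z, gu.app X ≫ g = f)
    {P : C} (hP : IsDerivedProjective t P) (X : C) :
    Function.Bijective (fun φ : P ⟶ X => φ ≫ gu.app X) := by
  obtain ⟨A, B, hA, hB, f, g, h, mem⟩ := t.exists_triangle X (-1) 0 (by omega)
  obtain ⟨k, hkiso, hk⟩ := aux_ge_iso t τge gu gem gfac mem hA hB
  have h1 := aux_comp_g_bij t hP mem hA
  have heq : (fun φ : P ⟶ X => φ ≫ gu.app X)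
      = (fun ψ : P ⟶ B => ψ ≫ k) ∘ (fun φ : P ⟶ X => φ ≫ g) := by
    funext φ
    simp only [Function.comp_apply, Category.assoc, hk]
  rw [heq]
  refine Function.Bijective.comp ?_ h1
  haveI := hkiso
  constructor
  · intro a b hab
    exact (cancel_mono k).1 hab
  · intro ψ
    exact ⟨ψ ≫ inv k, by simp⟩

lemma aux_key_bij (t : TStructure C)
    (τle : C ⥤ C) (cu : τle ⟶ 𝟭 C)
    (lem : ∀ Y : C, t.le 0 (τle.obj Y))
    (lfac : ∀ X Z : C, t.le 0 Z → ∀ f : Z ⟶ X, ∃! g : Z ⟶ τle.obj X, g ≫ cu.app X = f)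
    (τge : C ⥤ C) (gu : 𝟭 C ⟶ τge)
    (gem : ∀ Y : C, t.ge 0 (τge.obj Y))
    (gfac : ∀ X Z : C, t.ge 0 Z → ∀ f : X ⟶ Z, ∃! g : τge.obj X ⟶ Z, gu.app X ≫ g = f)
    (hh : ∀ Y : C, t.ge 0 (τle.obj (τge.obj Y)))
    {P : C} (hP : IsDerivedProjective t P) (X : C) :
    Function.Bijective (fun φ : P ⟶ X => τle.map (τge.map φ)) := by
  have hgeP : t.le 0 (τge.obj P) := aux_tge_le t τge gu gem gfac hP.1
  have hc : IsIso (cu.app (τge.obj P)) := aux_counit_iso t τle cu lem lfac hgeP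
  haveI := hc
  set η : P ⟶ τle.obj (τge.obj P) := gu.app P ≫ inv (cu.app (τge.obj P)) with hη
  have hΦ₂ : Function.Bijective
      (fun k : P ⟶ τle.obj (τge.obj X) => k ≫ cu.app (τge.obj X)) :=
    (Function.bijective_iff_existsUnique _).2 (fun b => lfac (τge.obj X) P hP.1 b)
  have hΦ₁ := aux_comp_unit_bij t τge gu gem gfac hP X
  have hα : Function.Bijective
      (fun ψ : (τle.obj (τge.obj P) ⟶ τle.obj (τge.obj X)) => η ≫ ψ) := by
    rw [Function.bijective_iff_existsUnique]
    intro φ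
    obtain ⟨χ, hχ, hχu⟩ := gfac P (τle.obj (τge.obj X)) (hh X) φ
    refine ⟨cu.app (τge.obj P) ≫ χ, ?_, ?_⟩
    · show η ≫ cu.app (τge.obj P) ≫ χ = φ
      rw [hη, Category.assoc, IsIso.inv_hom_id_assoc]
      exact hχ
    · intro ψ hψ
      have hinv : inv (cu.app (τge.obj P)) ≫ ψ = χ := by
        refine hχu _ ?_
        rw [← hψ, hη, Category.assoc]
      rw [← hinv, IsIso.hom_inv_id_assoc]
  have hcomm : ∀ φ : P ⟶ X,
      (η ≫ τle.map (τge.map φ)) ≫ cu.app (τge.obj X) = φ ≫ gu.app X := by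
    intro φ
    have hnat : τle.map (τge.map φ) ≫ cu.app (τge.obj X)
        = cu.app (τge.obj P) ≫ τge.map φ := by
      simp
    have h3 : φ ≫ gu.app X = gu.app P ≫ τge.map φ := by
      simpa using gu.naturality φ
    rw [Category.assoc, hnat, hη, Category.assoc, IsIso.inv_hom_id_assoc, h3]
  constructor
  · intro a b hab
    apply hΦ₁.1
    show a ≫ gu.app X = b ≫ gu.app X
    rw [← hcomm a, ← hcomm b]
    show (η ≫ (fun φ : P ⟶ X => τle.map (τge.map φ)) a) ≫ cu.app (τge.obj X)
      = (η ≫ (fun φ : P ⟶ X => τle.map (τge.map φ)) b) ≫ cu.app (τge.obj X)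
    rw [hab]
  · intro ψ
    obtain ⟨φ, hφ⟩ := hΦ₁.2 ((η ≫ ψ) ≫ cu.app (τge.obj X))
    refine ⟨φ, ?_⟩
    apply hα.1
    apply hΦ₂.1
    show (η ≫ τle.map (τge.map φ)) ≫ cu.app (τge.obj X) = (η ≫ ψ) ≫ cu.app (τge.obj X)
    rw [hcomm φ]
    exact hφ

lemma aux_projCover_unique {A : Type*} [Category A] {P₁ P₂ X : A}
    {f₁ : P₁ ⟶ X} {f₂ : P₂ ⟶ X} (h₁ : IsProjectiveCover f₁) (h₂ : IsProjectiveCover f₂) :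
    ∃ u : P₁ ⟶ P₂, IsIso u ∧ u ≫ f₂ = f₁ := by
  obtain ⟨hproj₁, hepi₁, hess₁⟩ := h₁
  obtain ⟨hproj₂, hepi₂, hess₂⟩ := h₂
  haveI := hproj₁; haveI := hproj₂; haveI := hepi₁; haveI := hepi₂
  let u : P₁ ⟶ P₂ := Projective.factorThru f₁ f₂
  have hu : u ≫ f₂ = f₁ := Projective.factorThru_comp _ _
  have huepi : Epi u := hess₂ _ u (by rw [hu]; exact hepi₁)
  haveI := huepi
  let s : P₂ ⟶ P₁ := Projective.factorThru (𝟙 P₂) u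
  have hs : s ≫ u = 𝟙 P₂ := Projective.factorThru_comp _ _
  have hsf : s ≫ f₁ = f₂ := by rw [← hu, ← Category.assoc, hs, Category.id_comp]
  have hsepi : Epi s := hess₁ _ s (by rw [hsf]; exact hepi₂)
  haveI := hsepi
  haveI : IsSplitMono s := ⟨⟨⟨u, hs⟩⟩⟩
  haveI : IsIso s := isIso_of_epi_of_isSplitMono s
  have husiso : u = inv s := by
    rw [← cancel_epi s, hs, IsIso.hom_inv_id]
  refine ⟨u, ?_, hu⟩
  rw [husiso]
  infer_instance

end UniquenessAux

/-- derived projective covers are unique up to isomorphism. -/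
theorem derivedProjectiveCover_unique (t : TStructure C) (TD : TruncationData t)
    {P₁ P₂ X : C} (π₁ : P₁ ⟶ X) (π₂ : P₂ ⟶ X)
    (h₁ : IsDerivedProjectiveCover TD π₁) (h₂ : IsDerivedProjectiveCover TD π₂) :
    ∃ g : P₁ ⟶ P₂, IsIso g ∧ g ≫ π₂ = π₁ := by
  obtain ⟨H, H_heart, τle, cu, lem, lfac, τge, gu, gem, gfac, H_eq⟩ := TD
  subst H_eq
  obtain ⟨hP₁, hc₁⟩ := h₁
  obtain ⟨hP₂, hc₂⟩ := h₂
  have hh : ∀ Y : C, t.ge 0 (τle.obj (τge.obj Y)) := fun Y => (H_heart Y).2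
  have key : ∀ {P : C}, IsDerivedProjective t P → ∀ X : C,
      Function.Bijective (fun φ : P ⟶ X => τle.map (τge.map φ)) :=
    fun hP X => aux_key_bij t τle cu lem lfac τge gu gem gfac hh hP X
  obtain ⟨u, huiso, hu⟩ := aux_projCover_unique hc₁ hc₂
  haveI := huiso
  obtain ⟨g, hg⟩ := (key hP₁ P₂).2
    (show τle.obj (τge.obj P₁) ⟶ τle.obj (τge.obj P₂) from u.hom)
  obtain ⟨v, hv1, hv2⟩ : ∃ v, u ≫ v = 𝟙 _ ∧ v ≫ u = 𝟙 _ :=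
    ⟨inv u, IsIso.hom_inv_id u, IsIso.inv_hom_id u⟩
  obtain ⟨g', hg'⟩ := (key hP₂ P₁).2
    (show τle.obj (τge.obj P₂) ⟶ τle.obj (τge.obj P₁) from v.hom)
  have hgπ : g ≫ π₂ = π₁ := by
    apply (key hP₁ X).1
    show τle.map (τge.map (g ≫ π₂)) = τle.map (τge.map π₁)
    rw [Functor.map_comp, Functor.map_comp]
    rw [show τle.map (τge.map g) = _ from hg]
    exact congrArg (fun w => w.hom) hu
  have hgg' : g ≫ g' = 𝟙 P₁ := by
    apply (key hP₁ P₁).1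
    show τle.map (τge.map (g ≫ g')) = τle.map (τge.map (𝟙 P₁))
    rw [Functor.map_comp, Functor.map_comp, CategoryTheory.Functor.map_id,
      CategoryTheory.Functor.map_id]
    rw [show τle.map (τge.map g) = _ from hg, show τle.map (τge.map g') = _ from hg']
    exact congrArg (fun w => w.hom) hv1
  have hg'g : g' ≫ g = 𝟙 P₂ := by
    apply (key hP₂ P₂).1
    show τle.map (τge.map (g' ≫ g)) = τle.map (τge.map (𝟙 P₂))
    rw [Functor.map_comp, Functor.map_comp, CategoryTheory.Functor.map_id,
      CategoryTheory.Functor.map_id]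
    rw [show τle.map (τge.map g) = _ from hg, show τle.map (τge.map g') = _ from hg']
    exact congrArg (fun w => w.hom) hv2
  exact ⟨g, ⟨⟨g', hgg', hg'g⟩⟩, hgπ⟩

end Paper
end

section
/- Naturality of w-t-strict orthogonality: Let $w, w'$ be weight structures on triangulated categories $\mathcal{C}, \mathcal{C}'$ and $t, t'$ be t-structures on triangulated categories $\mathcal{D}, \mathcal{D}'$, with dualities $\Phi \colon \mathcal{C}^{op} \times \mathcal{D} \to \mathcal{A}$ and $\Phi' \colon \mathcal{C}'^{op} \times \mathcal{D}' \to \mathcal{A}$ such that $w$ is w-t-strictly left orthogonal to $t$ w.r.t. $\Phi$ and $w'$ to $t'$ w.r.t. $\Phi'$. Let $F \colon \mathcal{C} \to \mathcal{C}'$ and $G \colon \mathcal{D}' \to \mathcal{D}$ be functors with natural isomorphisms $\Phi'(F(X), Y) \cong \Phi(X, G(Y))$. Then $F(\mathcal{C}_{w>0}) \subseteq \mathcal{C}'_{w'>0}$ if and only if $G(\mathcal{D}'^{t'\leq 0}) \subseteq \mathcal{D}^{t\leq 0}$. -/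
open CategoryTheory Limits Pretriangulated

namespace Paper

universe v u

variable {C : Type u} [Category.{v} C] [Preadditive C] [HasZeroObject C]
  [HasShift C ℤ] [∀ n : ℤ, (shiftFunctor C n).Additive] [Pretriangulated C]

open CategoryTheory.Triangulated

instance (t : TStructure C) : Category.{v} (Heart t) :=
  ObjectProperty.FullSubcategory.category (heartSet t)

section Aux

variable {D : Type*} [Category D] [Preadditive D] [HasZeroObject D] [HasShift D ℤ]
  [∀ n : ℤ, (shiftFunctor D n).Additive] [Pretriangulated D]
  {A : Type*} [Category A]

lemma aux_gt_iff (w : WeightStructureOn (Set.univ : Set C)) (t : TStructure D)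
    (Φ : Cᵒᵖ ⥤ D ⥤ A)
    (σ : ∀ (X : C) (Y : D), (Φ.obj (Opposite.op X)).obj Y ≅
      (Φ.obj (Opposite.op (X⟦(1 : ℤ)⟧))).obj (Y⟦(1 : ℤ)⟧))
    (hwt₁ : w.ge = {X : C | ∀ Y : D, t.le (-1) Y → IsZero ((Φ.obj (Opposite.op X)).obj Y)})
    (X : C) :
    X ∈ w.gt ↔ ∀ Y : D, t.le 0 Y → IsZero ((Φ.obj (Opposite.op X)).obj Y) := by
  show X⟦(1 : ℤ)⟧ ∈ w.ge ↔ _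
  rw [hwt₁]
  constructor
  · intro h Y hY
    exact (h (Y⟦(1 : ℤ)⟧) (t.le_shift 0 1 (-1) (by ring) Y hY)).of_iso (σ X Y)
  · intro h Y hY
    have h1 : t.le 0 (Y⟦(-1 : ℤ)⟧) := t.le_shift (-1) (-1) 0 (by ring) Y hY
    have h2 : IsZero ((Φ.obj (Opposite.op (X⟦(1 : ℤ)⟧))).obj ((Y⟦(-1 : ℤ)⟧)⟦(1 : ℤ)⟧)) :=
      (h _ h1).of_iso (σ X (Y⟦(-1 : ℤ)⟧)).symm
    exact h2.of_iso ((Φ.obj (Opposite.op (X⟦(1 : ℤ)⟧))).mapIso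
      ((shiftFunctorCompIsoId D (-1) 1 (by ring)).app Y)).symm

lemma aux_le_iff (w : WeightStructureOn (Set.univ : Set C)) (t : TStructure D)
    (Φ : Cᵒᵖ ⥤ D ⥤ A)
    (σ : ∀ (X : C) (Y : D), (Φ.obj (Opposite.op X)).obj Y ≅
      (Φ.obj (Opposite.op (X⟦(1 : ℤ)⟧))).obj (Y⟦(1 : ℤ)⟧))
    (hwt₃ : {Y : D | t.le (-1) Y} = {Y : D | ∀ X ∈ w.ge, IsZero ((Φ.obj (Opposite.op X)).obj Y)})
    (Z : D) :
    t.le 0 Z ↔ ∀ X ∈ w.gt, IsZero ((Φ.obj (Opposite.op X)).obj Z) := by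
  constructor
  · intro h X hX
    have h1 : t.le (-1) (Z⟦(1 : ℤ)⟧) := t.le_shift 0 1 (-1) (by ring) Z h
    rw [Set.ext_iff] at hwt₃
    have h2 := (hwt₃ (Z⟦(1 : ℤ)⟧)).1 h1 (X⟦(1 : ℤ)⟧) hX
    exact h2.of_iso (σ X Z)
  · intro h
    have h1 : t.le (-1) (Z⟦(1 : ℤ)⟧) := by
      rw [Set.ext_iff] at hwt₃
      refine (hwt₃ (Z⟦(1 : ℤ)⟧)).2 ?_
      intro X hX
      have e : X ≅ (X⟦(-1 : ℤ)⟧)⟦(1 : ℤ)⟧ :=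
        ((shiftFunctorCompIsoId C (-1) 1 (by ring)).app X).symm
      have hX' : X⟦(-1 : ℤ)⟧ ∈ w.gt := w.ge_iso X _ e hX
      have h2 : IsZero ((Φ.obj (Opposite.op ((X⟦(-1 : ℤ)⟧)⟦(1 : ℤ)⟧))).obj (Z⟦(1 : ℤ)⟧)) :=
        (h _ hX').of_iso (σ (X⟦(-1 : ℤ)⟧) Z).symm
      exact h2.of_iso ((Φ.mapIso e.op).app (Z⟦(1 : ℤ)⟧)).symm
    have h2 : t.le 0 ((Z⟦(1 : ℤ)⟧)⟦(-1 : ℤ)⟧) := t.le_shift (-1) (-1) 0 (by ring) _ h1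
    exact ((t.le 0).prop_iff_of_iso
      ((shiftFunctorCompIsoId D 1 (-1) (by ring)).app Z)).1 h2

end Aux

/-- naturality of w-t-strict orthogonality with respect to a pair of
"Φ-Φ'-adjoint" functors. -/
theorem orthogonality_naturality
    {C' : Type*} [Category C'] [Preadditive C'] [HasZeroObject C'] [HasShift C' ℤ]
      [∀ n : ℤ, (shiftFunctor C' n).Additive] [Pretriangulated C']
    {D : Type*} [Category D] [Preadditive D] [HasZeroObject D] [HasShift D ℤ]
      [∀ n : ℤ, (shiftFunctor D n).Additive] [Pretriangulated D]
    {D' : Type*} [Category D'] [Preadditive D'] [HasZeroObject D'] [HasShift D' ℤ]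
      [∀ n : ℤ, (shiftFunctor D' n).Additive] [Pretriangulated D']
    {A : Type*} [Category A] [Abelian A]
    (w : WeightStructureOn (Set.univ : Set C))
    (w' : WeightStructureOn (Set.univ : Set C'))
    (t : TStructure D) (t' : TStructure D')
    (Φ : Cᵒᵖ ⥤ D ⥤ A) (Φ' : C'ᵒᵖ ⥤ D' ⥤ A)
    -- the dualities are compatible with shifts: `Φ(-,-) ≅ Φ(-[1],-[1])`
    (σ : ∀ (X : C) (Y : D), (Φ.obj (Opposite.op X)).obj Y ≅
      (Φ.obj (Opposite.op (X⟦(1 : ℤ)⟧))).obj (Y⟦(1 : ℤ)⟧))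
    (σ' : ∀ (X : C') (Y : D'), (Φ'.obj (Opposite.op X)).obj Y ≅
      (Φ'.obj (Opposite.op (X⟦(1 : ℤ)⟧))).obj (Y⟦(1 : ℤ)⟧))
    -- `w` is w-t-strictly left orthogonal to `t` with respect to `Φ`
    (hwt₁ : w.ge = {X : C | ∀ Y : D, t.le (-1) Y → IsZero ((Φ.obj (Opposite.op X)).obj Y)})
    (hwt₂ : w.le = {X : C | ∀ Y : D, t.ge 1 Y → IsZero ((Φ.obj (Opposite.op X)).obj Y)})
    (hwt₃ : {Y : D | t.le (-1) Y} = {Y : D | ∀ X ∈ w.ge, IsZero ((Φ.obj (Opposite.op X)).obj Y)})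
    (hwt₄ : {Y : D | t.ge 1 Y} = {Y : D | ∀ X ∈ w.le, IsZero ((Φ.obj (Opposite.op X)).obj Y)})
    -- `w'` is w-t-strictly left orthogonal to `t'` with respect to `Φ'`
    (hwt₁' : w'.ge = {X : C' | ∀ Y : D', t'.le (-1) Y → IsZero ((Φ'.obj (Opposite.op X)).obj Y)})
    (hwt₂' : w'.le = {X : C' | ∀ Y : D', t'.ge 1 Y → IsZero ((Φ'.obj (Opposite.op X)).obj Y)})
    (hwt₃' : {Y : D' | t'.le (-1) Y} = {Y : D' | ∀ X ∈ w'.ge, IsZero ((Φ'.obj (Opposite.op X)).obj Y)})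
    (hwt₄' : {Y : D' | t'.ge 1 Y} = {Y : D' | ∀ X ∈ w'.le, IsZero ((Φ'.obj (Opposite.op X)).obj Y)})
    (F : C ⥤ C') (G : D' ⥤ D)
    -- `F` and `G` are `Φ`-`Φ'`-adjoint: `Φ'(F(X), Y) ≅ Φ(X, G(Y))` naturally
    (adj : F.op ⋙ Φ' ≅ Φ ⋙ (Functor.whiskeringLeft D' D A).obj G) :
    (∀ X : C, X ∈ w.gt → F.obj X ∈ w'.gt) ↔
      (∀ Y : D', t'.le 0 Y → t.le 0 (G.obj Y)) := by
  constructor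
  · intro hF Y hY
    rw [aux_le_iff w t Φ σ hwt₃ (G.obj Y)]
    intro X hX
    have h3 := (aux_gt_iff w' t' Φ' σ' hwt₁' (F.obj X)).1 (hF X hX) Y hY
    exact h3.of_iso ((adj.app (Opposite.op X)).app Y).symm
  · intro hG X hX
    rw [aux_gt_iff w' t' Φ' σ' hwt₁' (F.obj X)]
    intro Y hY
    have h1 := (aux_le_iff w t Φ σ hwt₃ (G.obj Y)).1 (hG Y hY) X hX
    exact h1.of_iso ((adj.app (Opposite.op X)).app Y)

end Paper
end
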